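/- Let D, D' be polyhedral scatterers with G̃ the connected component of ℝ^N \ (D ∪ D') containing the exterior of a large ball, and suppose ∂G̃ is not contained in D ∩ D'. Then (after possibly swapping D and D') there exists a point x' in (∂G' \ D) ∩ ∂G̃ lying in the relative interior of one of the cells of ∂G', and hence a hyperplane Π' and r > 0 with Π' ∩ B_r(x') ⊆ (∂G' \ D) ∩ ∂G̃. -/

import Mathlib

open Metric Set

/-- A cell: the closure of a (relatively) open subset of an affine hyperplane. -/
def IsCell {N : ℕ} (C : Set (EuclideanSpace ℝ (Fin N))) : Prop :=
  ∃ (a : EuclideanSpace ℝ (Fin N)) (c : ℝ) (U : Set (EuclideanSpace ℝ (Fin N))),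
    a ≠ 0 ∧ IsOpen U ∧ C = closure (U ∩ {x | (inner ℝ a x : ℝ) = c})

/-- A polyhedral scatterer: a compact set with connected complement whose
boundary is a finite union of cells. -/
def IsPolyhedralScatterer {N : ℕ} (D : Set (EuclideanSpace ℝ (Fin N))) : Prop :=
  IsCompact D ∧ IsConnected Dᶜ ∧
    ∃ (n : ℕ) (C : Fin n → Set (EuclideanSpace ℝ (Fin N))),
      (∀ i, IsCell (C i)) ∧ frontier Dᶜ = ⋃ i, C i

/-- For scatterers `D₁` (to be avoided) and `D₂` (whose boundary is probed):
there is a point of `(∂(D₂ᶜ) \ D₁) ∩ ∂G'` around which a full flat hyperplane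
patch stays inside `(∂(D₂ᶜ) \ D₁) ∩ ∂G'`. -/
def FlatPatchOn {N : ℕ} (D₁ D₂ G' : Set (EuclideanSpace ℝ (Fin N))) : Prop :=
  ∃ x' ∈ (frontier D₂ᶜ \ D₁) ∩ frontier G',
    ∃ (a : EuclideanSpace ℝ (Fin N)) (c : ℝ) (r : ℝ), a ≠ 0 ∧ 0 < r ∧
      x' ∈ {x | (inner ℝ a x : ℝ) = c} ∧
      {x | (inner ℝ a x : ℝ) = c} ∩ ball x' r ⊆ (frontier D₂ᶜ \ D₁) ∩ frontier G'

lemma smul_dist_aux {N : ℕ} (p v : EuclideanSpace ℝ (Fin N)) {t : ℝ} (ht : 0 < t) :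
    dist (p + t • v) p = t * ‖v‖ := by
  rw [dist_eq_norm, add_sub_cancel_left, norm_smul, Real.norm_eq_abs, abs_of_pos ht]

lemma mem_closure_pos_side {N : ℕ} {a : EuclideanSpace ℝ (Fin N)} (ha : a ≠ 0)
    {c δ : ℝ} {x₁ p : EuclideanSpace ℝ (Fin N)} (hpδ : p ∈ ball x₁ δ)
    (hpc : (inner ℝ a p : ℝ) = c) :
    p ∈ closure {x | x ∈ ball x₁ δ ∧ c < (inner ℝ a x : ℝ)} := by
  have hna : (0:ℝ) < ‖a‖ := norm_pos_iff.mpr ha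
  rw [Metric.mem_closure_iff]
  intro ε hε
  have hd : 0 < δ - dist p x₁ := sub_pos.mpr (mem_ball.mp hpδ)
  set t : ℝ := min ε (δ - dist p x₁) / (2 * ‖a‖) with ht
  have htpos : 0 < t := div_pos (lt_min hε hd) (by positivity)
  have hta : t * ‖a‖ = min ε (δ - dist p x₁) / 2 := by
    rw [ht]; field_simp
  have hmin1 : min ε (δ - dist p x₁) ≤ ε := min_le_left _ _
  have hmin2 : min ε (δ - dist p x₁) ≤ δ - dist p x₁ := min_le_right _ _
  refine ⟨p + t • a, ⟨?_, ?_⟩, ?_⟩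
  · have h1 : dist (p + t • a) p = t * ‖a‖ := smul_dist_aux p a htpos
    have := calc dist (p + t • a) x₁ ≤ dist (p + t • a) p + dist p x₁ := dist_triangle _ _ _
      _ < δ := by rw [h1, hta]; linarith
    exact mem_ball.mpr this
  · have h2 : (inner ℝ a (p + t • a) : ℝ) = c + t * (‖a‖ * ‖a‖) := by
      rw [inner_add_right, inner_smul_right, hpc, real_inner_self_eq_norm_mul_norm]
    show c < (inner ℝ a (p + t • a) : ℝ)
    rw [h2]; nlinarith [mul_pos htpos (mul_pos hna hna)]
  · rw [dist_comm, smul_dist_aux p a htpos, hta]; linarith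

lemma plane_subset_plane {N : ℕ} {a b : EuclideanSpace ℝ (Fin N)} {c d : ℝ}
    (ha : a ≠ 0) (hb : b ≠ 0) {w : EuclideanSpace ℝ (Fin N)} {r : ℝ} (hr : 0 < r)
    (hwb : (inner ℝ b w : ℝ) = d)
    (h : ∀ x, (inner ℝ b x : ℝ) = d → x ∈ ball w r → (inner ℝ a x : ℝ) = c) :
    ∀ x, (inner ℝ a x : ℝ) = c → (inner ℝ b x : ℝ) = d := by
  have hwa : (inner ℝ a w : ℝ) = c := h w hwb (mem_ball_self hr)
  have hbb : (0:ℝ) < (inner ℝ b b : ℝ) := by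
    rw [real_inner_self_eq_norm_mul_norm]
    have : (0:ℝ) < ‖b‖ := norm_pos_iff.mpr hb
    positivity
  have hker : ∀ v : EuclideanSpace ℝ (Fin N), (inner ℝ b v : ℝ) = 0 → (inner ℝ a v : ℝ) = 0 := by
    intro v hv
    rcases eq_or_ne v 0 with rfl | hv0
    · simp
    have hnv : (0:ℝ) < ‖v‖ := norm_pos_iff.mpr hv0
    set t : ℝ := r / (2 * ‖v‖) with htdef
    have htpos : 0 < t := by positivity
    have h1 : (inner ℝ b (w + t • v) : ℝ) = d := by
      rw [inner_add_right, inner_smul_right, hv, hwb]; ring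
    have h2 : w + t • v ∈ ball w r := by
      rw [mem_ball, smul_dist_aux w v htpos]
      have : t * ‖v‖ = r / 2 := by rw [htdef]; field_simp
      rw [this]; linarith
    have h3 := h _ h1 h2
    rw [inner_add_right, inner_smul_right, hwa] at h3
    have h4 : t * (inner ℝ a v : ℝ) = 0 := by linarith
    rcases mul_eq_zero.mp h4 with h | h
    · exact absurd h (ne_of_gt htpos)
    · exact h
  have hprop : ∀ x : EuclideanSpace ℝ (Fin N),
      (inner ℝ a x : ℝ) = (inner ℝ a b : ℝ) / (inner ℝ b b : ℝ) * (inner ℝ b x : ℝ) := by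
    intro x
    have hv : (inner ℝ b (x - ((inner ℝ b x : ℝ) / (inner ℝ b b : ℝ)) • b) : ℝ) = 0 := by
      rw [inner_sub_right, inner_smul_right, div_mul_cancel₀ _ (ne_of_gt hbb), sub_self]
    have h5 := hker _ hv
    rw [inner_sub_right, inner_smul_right, sub_eq_zero] at h5
    rw [h5]; ring
  have hmu : (inner ℝ a b : ℝ) / (inner ℝ b b : ℝ) ≠ 0 := by
    intro h0
    have h6 := hprop a
    rw [h0, zero_mul, real_inner_comm] at h6
    exact ha (inner_self_eq_zero.mp h6)
  intro x hx
  have h1 := hprop x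
  have h2 := hprop w
  rw [hx] at h1
  rw [hwa, hwb] at h2
  have : (inner ℝ a b : ℝ) / (inner ℝ b b : ℝ) * (inner ℝ b x : ℝ)
      = (inner ℝ a b : ℝ) / (inner ℝ b b : ℝ) * d := by rw [← h1, h2]
  exact mul_left_cancel₀ hmu this

lemma key_flat {N : ℕ} (D₁ D₂ G' : Set (EuclideanSpace ℝ (Fin N)))
    (hD₁c : IsClosed D₁) (hD₂c : IsClosed D₂)
    (hcells : ∃ (n : ℕ) (C : Fin n → Set (EuclideanSpace ℝ (Fin N))),
      (∀ i, IsCell (C i)) ∧ frontier D₂ᶜ = ⋃ i, C i)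
    (hG'open : IsOpen G') (hG'sub : G' ⊆ (D₁ ∪ D₂)ᶜ)
    (hfr : frontier G' ⊆ D₁ ∪ D₂)
    (z : EuclideanSpace ℝ (Fin N)) (hz : z ∈ frontier G') (hzD : z ∉ D₁) :
    FlatPatchOn D₁ D₂ G' := by
  obtain ⟨n, C, hC, hE⟩ := hcells
  have hG'D₂ : G' ⊆ D₂ᶜ := fun x hx hxD => (hG'sub hx) (Or.inr hxD)
  have hED₂ : frontier D₂ᶜ ⊆ D₂ := by
    rw [frontier_compl]
    exact frontier_subset_closure.trans hD₂c.closure_eq.subset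
  have hfrD₂ : ∀ p ∈ frontier G', p ∉ D₁ → p ∈ frontier D₂ᶜ := by
    intro p hp hpD
    have h1 : p ∈ closure D₂ᶜ := closure_mono hG'D₂ (frontier_subset_closure hp)
    have h2 : p ∈ D₂ := (hfr hp).resolve_left hpD
    exact ⟨h1, fun hint => (interior_subset hint) h2⟩
  have hfrnotG' : ∀ p, p ∉ G' → p ∈ closure G' → p ∈ frontier G' :=
    fun p h1 h2 => ⟨h2, by rwa [hG'open.interior_eq]⟩
  -- ball avoiding D₁
  obtain ⟨ρ, hρpos, hρ⟩ := Metric.isOpen_iff.mp hD₁c.isOpen_compl z hzD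
  -- Baire argument
  set K := frontier G' ∩ closedBall z (ρ/2) with hKdef
  have hKc : IsClosed K := isClosed_frontier.inter isClosed_closedBall
  have hKD : ∀ p ∈ K, p ∉ D₁ := by
    intro p hp
    exact hρ (mem_ball.mpr (lt_of_le_of_lt (mem_closedBall.mp hp.2) (by linarith)))
  have hKcover : ∀ p ∈ K, ∃ i, p ∈ C i :=
    fun p hp => mem_iUnion.mp (hE ▸ hfrD₂ p hp.1 (hKD p hp))
  have hCclosed : ∀ i, IsClosed (C i) := by
    intro i
    obtain ⟨a, c, U, _, _, hCeq⟩ := hC i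
    rw [hCeq]; exact isClosed_closure
  haveI : CompleteSpace K := hKc.completeSpace_coe
  have hfc : ∀ i, IsClosed ((Subtype.val ⁻¹' (C i)) : Set K) :=
    fun i => (hCclosed i).preimage continuous_subtype_val
  have hfU : ⋃ i, ((Subtype.val ⁻¹' (C i)) : Set K) = univ := by
    refine eq_univ_of_forall fun x => mem_iUnion.mpr ?_
    obtain ⟨i, hi⟩ := hKcover x.1 x.2
    exact ⟨i, hi⟩
  have hdense := dense_iUnion_interior_of_closed hfc hfU
  have hzK : z ∈ K := ⟨hz, mem_closedBall_self (by linarith)⟩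
  obtain ⟨x, hxint, hxd⟩ :=
    Metric.mem_closure_iff.mp (hdense ⟨z, hzK⟩) (ρ/2) (half_pos hρpos)
  obtain ⟨i, hxi⟩ := mem_iUnion.mp hxint
  obtain ⟨ε, hεpos, hε⟩ := Metric.mem_nhds_iff.mp (mem_interior_iff_mem_nhds.mp hxi)
  set x₁ : EuclideanSpace ℝ (Fin N) := (x : EuclideanSpace ℝ (Fin N)) with hx₁def
  have hx₁fr : x₁ ∈ frontier G' := x.2.1
  have hx₁z : dist x₁ z < ρ/2 := by
    have := hxd
    rw [Subtype.dist_eq, dist_comm] at this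
    exact this
  set δ := min ε (ρ/2 - dist x₁ z) with hδdef
  have hδpos : 0 < δ := lt_min hεpos (by linarith)
  have hballD : ball x₁ δ ⊆ D₁ᶜ := by
    intro p hp
    refine hρ (mem_ball.mpr ?_)
    have h1 : dist p x₁ < δ := mem_ball.mp hp
    have h2 : δ ≤ ρ/2 - dist x₁ z := min_le_right _ _
    calc dist p z ≤ dist p x₁ + dist x₁ z := dist_triangle _ _ _
      _ < ρ := by linarith
  have hfrC : ∀ p ∈ frontier G', p ∈ ball x₁ δ → p ∈ C i := by
    intro p hp hpb
    have h1 : dist p x₁ < δ := mem_ball.mp hpb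
    have h2 : δ ≤ ε := min_le_left _ _
    have h3 : δ ≤ ρ/2 - dist x₁ z := min_le_right _ _
    have hpK : p ∈ K := ⟨hp, mem_closedBall.mpr (by
      calc dist p z ≤ dist p x₁ + dist x₁ z := dist_triangle _ _ _
        _ ≤ ρ/2 := by linarith)⟩
    have : (⟨p, hpK⟩ : K) ∈ Metric.ball x ε := by
      rw [mem_ball, Subtype.dist_eq]
      exact lt_of_lt_of_le h1 h2
    exact hε this
  obtain ⟨a, c, U, ha, hUopen, hCeq⟩ := hC i
  have hPclosed : IsClosed {y : EuclideanSpace ℝ (Fin N) | (inner ℝ a y : ℝ) = c} :=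
    isClosed_eq (Continuous.inner continuous_const continuous_id) continuous_const
  have hCiP : C i ⊆ {y | (inner ℝ a y : ℝ) = c} := by
    rw [hCeq]; exact closure_minimal (fun y hy => hy.2) hPclosed
  have hfrP : ∀ p ∈ frontier G', p ∈ ball x₁ δ → (inner ℝ a p : ℝ) = c :=
    fun p h1 h2 => hCiP (hfrC p h1 h2)
  have hx₁P : (inner ℝ a x₁ : ℝ) = c := hfrP x₁ hx₁fr (mem_ball_self hδpos)
  -- a point of G' in the ball, off the plane
  obtain ⟨q, hqG, hqb, hqne⟩ :
      ∃ q ∈ G', q ∈ ball x₁ δ ∧ (inner ℝ a q : ℝ) ≠ c := by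
    obtain ⟨q₀, hq₀G, hq₀d⟩ :=
      Metric.mem_closure_iff.mp (frontier_subset_closure hx₁fr) δ hδpos
    have hq₀b : q₀ ∈ ball x₁ δ := mem_ball.mpr (by rwa [dist_comm] at hq₀d)
    by_cases hq₀ : (inner ℝ a q₀ : ℝ) = c
    · obtain ⟨η, hηpos, hη⟩ :=
        Metric.isOpen_iff.mp (hG'open.inter isOpen_ball) q₀ ⟨hq₀G, hq₀b⟩
      have hna : (0:ℝ) < ‖a‖ := norm_pos_iff.mpr ha
      set t : ℝ := η / (2 * ‖a‖) with htdef
      have htpos : 0 < t := by positivity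
      have hqq : q₀ + t • a ∈ ball q₀ η := by
        rw [mem_ball, smul_dist_aux q₀ a htpos]
        have : t * ‖a‖ = η / 2 := by rw [htdef]; field_simp
        rw [this]; linarith
      have hmem := hη hqq
      refine ⟨q₀ + t • a, hmem.1, hmem.2, ?_⟩
      rw [inner_add_right, inner_smul_right, hq₀, real_inner_self_eq_norm_mul_norm]
      nlinarith [mul_pos htpos (mul_pos hna hna)]
    · exact ⟨q₀, hq₀G, hq₀b, hq₀⟩
  clear hfrC hCiP hCeq hUopen hε hεpos hxi hxint hxd
  -- generic half-space argument (applied to (a,c) or (-a,-c))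
  suffices H : ∀ (a : EuclideanSpace ℝ (Fin N)) (c : ℝ), a ≠ 0 →
      (∀ p ∈ frontier G', p ∈ ball x₁ δ → (inner ℝ a p : ℝ) = c) →
      (∃ q ∈ G', q ∈ ball x₁ δ ∧ c < (inner ℝ a q : ℝ)) → FlatPatchOn D₁ D₂ G' by
    rcases lt_or_gt_of_ne hqne with hlt | hgt
    · refine H (-a) (-c) (neg_ne_zero.mpr ha) ?_ ⟨q, hqG, hqb, ?_⟩
      · intro p h1 h2
        rw [inner_neg_left, hfrP p h1 h2]
      · rw [inner_neg_left]; simpa using hlt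
    · exact H a c ha hfrP ⟨q, hqG, hqb, hgt⟩
  clear hfrP hx₁P hqne hqb hqG ha
  intro a c ha hfrP hq
  obtain ⟨q, hqG, hqb, hqc⟩ := hq
  have hx₁P : (inner ℝ a x₁ : ℝ) = c := hfrP x₁ hx₁fr (mem_ball_self hδpos)
  have hcont : Continuous fun y : EuclideanSpace ℝ (Fin N) => (inner ℝ a y : ℝ) :=
    Continuous.inner continuous_const continuous_id
  have hlin : IsLinearMap ℝ fun y : EuclideanSpace ℝ (Fin N) => (inner ℝ a y : ℝ) :=
    ⟨fun u v => inner_add_right a u v, fun t u => inner_smul_right a u t⟩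
  have hside : ∀ s : Set (EuclideanSpace ℝ (Fin N)), IsOpen s → Convex ℝ s →
      (∀ y ∈ s, y ∈ ball x₁ δ ∧ (inner ℝ a y : ℝ) ≠ c) →
      s ⊆ G' ∨ s ⊆ (closure G')ᶜ := by
    intro s hso hsc hsP
    refine hsc.isPreconnected.subset_or_subset hG'open isClosed_closure.isOpen_compl
      (disjoint_compl_right.mono_left subset_closure) ?_
    intro y hy
    obtain ⟨hyb, hyne⟩ := hsP y hy
    by_cases hyc : y ∈ closure G'
    · exact Or.inl (by_contra fun hyG => hyne (hfrP y (hfrnotG' y hyG hyc) hyb))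
    · exact Or.inr hyc
  have hHpG : {y | y ∈ ball x₁ δ ∧ c < (inner ℝ a y : ℝ)} ⊆ G' := by
    rcases hside _ (isOpen_ball.inter (isOpen_lt continuous_const hcont))
        ((convex_ball x₁ δ).inter (convex_halfSpace_gt hlin c))
        (fun y hy => ⟨hy.1, ((hy.2 : c < _)).ne'⟩) with h | h
    · exact h
    · exact absurd (subset_closure hqG) (h ⟨hqb, hqc⟩)
  have hclm : ∀ p, (inner ℝ a p : ℝ) = c → p ∈ ball x₁ δ →
      p ∈ closure {y | y ∈ ball x₁ δ ∧ (inner ℝ a y : ℝ) < c} := by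
    intro p hpc hpb
    have h1 := mem_closure_pos_side (neg_ne_zero.mpr ha) hpb
      (show (inner ℝ (-a) p : ℝ) = -c by rw [inner_neg_left, hpc])
    have hseteq : {y | y ∈ ball x₁ δ ∧ -c < (inner ℝ (-a) y : ℝ)}
        = {y | y ∈ ball x₁ δ ∧ (inner ℝ a y : ℝ) < c} := by
      ext y; simp [inner_neg_left]
    rwa [hseteq] at h1
  rcases hside _ (isOpen_ball.inter (isOpen_lt hcont continuous_const))
      ((convex_ball x₁ δ).inter (convex_halfSpace_lt hlin c))
      (fun y hy => ⟨hy.1, ((hy.2 : _ < c)).ne⟩) with hB | hA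
  · -- Case B : lower half-ball inside G'
    have hEP : ∀ p, p ∈ frontier D₂ᶜ → p ∈ ball x₁ δ → (inner ℝ a p : ℝ) = c := by
      intro p hpE hpb
      have hpG : p ∉ G' := fun h => hG'D₂ h (hED₂ hpE)
      rcases lt_trichotomy ((inner ℝ a p : ℝ)) c with h | h | h
      · exact absurd (hB ⟨hpb, h⟩) hpG
      · exact h
      · exact absurd (hHpG ⟨hpb, h⟩) hpG
    have hx₁E : x₁ ∈ frontier D₂ᶜ := hfrD₂ x₁ hx₁fr (hballD (mem_ball_self hδpos))
    obtain ⟨j, hj⟩ := mem_iUnion.mp (hE ▸ hx₁E)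
    obtain ⟨b, d, V, hb, hVopen, hCj⟩ := hC j
    have hx₁cl : x₁ ∈ closure (V ∩ {y | (inner ℝ b y : ℝ) = d}) := hCj ▸ hj
    obtain ⟨w, hwmem, hwd⟩ := Metric.mem_closure_iff.mp hx₁cl δ hδpos
    obtain ⟨r₀, hr₀pos, hr₀⟩ := Metric.isOpen_iff.mp hVopen w hwmem.1
    have hwx₁ : dist w x₁ < δ := by rwa [dist_comm] at hwd
    set r := min r₀ (δ - dist w x₁) with hrdef
    have hrpos : 0 < r := lt_min hr₀pos (by linarith)
    have hbw : ball w r ⊆ ball x₁ δ := by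
      intro p hp
      have h1 : dist p w < δ - dist w x₁ :=
        lt_of_lt_of_le (mem_ball.mp hp) (min_le_right _ _)
      exact mem_ball.mpr (by
        calc dist p x₁ ≤ dist p w + dist w x₁ := dist_triangle _ _ _
          _ < δ := by linarith)
    have hbV : ball w r ⊆ V := fun p hp =>
      hr₀ (mem_ball.mpr (lt_of_lt_of_le (mem_ball.mp hp) (min_le_left _ _)))
    have hCjE : C j ⊆ frontier D₂ᶜ := by
      rw [hE]; exact subset_iUnion C j
    have hVPE : ∀ p, p ∈ V → (inner ℝ b p : ℝ) = d → p ∈ frontier D₂ᶜ :=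
      fun p h1 h2 => hCjE (hCj ▸ subset_closure ⟨h1, h2⟩)
    have hPbP : ∀ y, (inner ℝ b y : ℝ) = d → y ∈ ball w r → (inner ℝ a y : ℝ) = c :=
      fun y hy hyb => hEP y (hVPE y (hbV hyb) hy) (hbw hyb)
    have hplane := plane_subset_plane ha hb hrpos hwmem.2 hPbP
    have hwa : (inner ℝ a w : ℝ) = c := hPbP w hwmem.2 (mem_ball_self hrpos)
    have hincl : ∀ p, (inner ℝ a p : ℝ) = c → p ∈ ball w r →
        p ∈ (frontier D₂ᶜ \ D₁) ∩ frontier G' := by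
      intro p hpc hpb
      have hpE : p ∈ frontier D₂ᶜ := hVPE p (hbV hpb) (hplane p hpc)
      have hpG : p ∉ G' := fun h => hG'D₂ h (hED₂ hpE)
      have hpcl : p ∈ closure G' :=
        closure_mono hHpG (mem_closure_pos_side ha (hbw hpb) hpc)
      exact ⟨⟨hpE, hballD (hbw hpb)⟩, hfrnotG' p hpG hpcl⟩
    exact ⟨w, hincl w hwa (mem_ball_self hrpos), a, c, r, ha, hrpos, hwa,
      fun y hy => hincl y hy.1 hy.2⟩
  · -- Case A : lower half-ball outside the closure of G'
    have hincl : ∀ p, (inner ℝ a p : ℝ) = c → p ∈ ball x₁ δ →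
        p ∈ (frontier D₂ᶜ \ D₁) ∩ frontier G' := by
      intro p hpc hpb
      have hpcl : p ∈ closure G' :=
        closure_mono hHpG (mem_closure_pos_side ha hpb hpc)
      have hpG : p ∉ G' := by
        intro hpG
        obtain ⟨η, hηpos, hη⟩ := Metric.isOpen_iff.mp hG'open p hpG
        obtain ⟨y, hy, hyd⟩ := Metric.mem_closure_iff.mp (hclm p hpc hpb) η hηpos
        exact (hA hy) (subset_closure (hη (mem_ball.mpr (by rwa [dist_comm] at hyd))))
      have hpfr := hfrnotG' p hpG hpcl
      exact ⟨⟨hfrD₂ p hpfr (hballD hpb), hballD hpb⟩, hpfr⟩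
    exact ⟨x₁, hincl x₁ hx₁P (mem_ball_self hδpos), a, c, δ, ha, hδpos, hx₁P,
      fun y hy => hincl y hy.1 hy.2⟩

/-- if the boundary of the unbounded component `G'` of the common
exterior of two polyhedral scatterers is not contained in their intersection,
then (after possibly swapping the scatterers) one finds a flat hyperplane patch
in `(∂G' \ D) ∩ ∂G̃` around a point in the relative interior of a cell. -/
theorem stmt16 {N : ℕ} (D D' : Set (EuclideanSpace ℝ (Fin N)))
    (hD : IsPolyhedralScatterer D) (hD' : IsPolyhedralScatterer D')
    (G' : Set (EuclideanSpace ℝ (Fin N)))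
    (x₀ : EuclideanSpace ℝ (Fin N)) (hx₀ : x₀ ∈ (D ∪ D')ᶜ)
    (hG' : G' = connectedComponentIn (D ∪ D')ᶜ x₀)
    (R : ℝ) (hext : {x : EuclideanSpace ℝ (Fin N) | R < ‖x‖} ⊆ G')
    (hfront : ¬ frontier G' ⊆ D ∩ D') :
    FlatPatchOn D D' G' ∨ FlatPatchOn D' D G' := by
  have hDc : IsClosed D := hD.1.isClosed
  have hD'c : IsClosed D' := hD'.1.isClosed
  have hopen : IsOpen (D ∪ D')ᶜ := (hDc.union hD'c).isOpen_compl
  have hG'open : IsOpen G' := hG' ▸ hopen.connectedComponentIn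
  have hG'sub : G' ⊆ (D ∪ D')ᶜ := hG' ▸ connectedComponentIn_subset _ _
  have hfr : frontier G' ⊆ D ∪ D' := by
    intro p hp
    by_contra hpD
    have hpc : p ∈ (D ∪ D')ᶜ := hpD
    have hop : IsOpen (connectedComponentIn (D ∪ D')ᶜ p) := hopen.connectedComponentIn
    obtain ⟨y, hy1, hy2⟩ := mem_closure_iff.mp hp.1 _ hop (mem_connectedComponentIn hpc)
    have h1 : connectedComponentIn (D ∪ D')ᶜ p = connectedComponentIn (D ∪ D')ᶜ y :=
      connectedComponentIn_eq hy1
    have h2 : connectedComponentIn (D ∪ D')ᶜ x₀ = connectedComponentIn (D ∪ D')ᶜ y := by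
      rw [hG'] at hy2
      exact connectedComponentIn_eq hy2
    have hpG : p ∈ G' := by
      rw [hG', h2, ← h1]
      exact mem_connectedComponentIn hpc
    exact hp.2 (by rw [hG'open.interior_eq]; exact hpG)
  obtain ⟨z, hz, hzDD⟩ := not_subset.mp hfront
  by_cases hzD : z ∈ D
  · have hzD' : z ∉ D' := fun h => hzDD ⟨hzD, h⟩
    right
    exact key_flat D' D G' hD'c hDc hD.2.2 hG'open
      (by rwa [union_comm] at hG'sub) (by rwa [union_comm] at hfr) z hz hzD'
  · left
    exact key_flat D D' G' hDc hD'c hD'.2.2 hG'open hG'sub hfr z hz hzD
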